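/- Let ℓ, a, b be nonnegative integers and let λ ∈ ℚ. If ℓ > a + b, then F_{ℓ,a,b}(λ) = 0. If ℓ ≤ a + b, then F_{ℓ,a,b}(λ) = (−1)^ℓ · b! / (ℓ!·(a+b−ℓ)!) · Q_{ℓ,a}(b,λ). Moreover, for fixed ℓ, a and λ, the map b ↦ Q_{ℓ,a}(b,λ) is a polynomial function of b of degree a whose coefficient of b^a equals (λ−1)^ℓ. -/

import Mathlib

/-- Falling factorial `x(x-1)⋯(x-n+1)` in `ℚ`. -/
def ffall (x : ℚ) (n : ℕ) : ℚ := ∏ i ∈ Finset.range n, (x - (i : ℚ))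

/-- Generalized binomial coefficient: `C(x, n) = x(x-1)⋯(x-n+1)/n!` for `n ≥ 0`,
and `C(x, n) = 0` for `n < 0`. -/
def gchoose (x : ℚ) (n : ℤ) : ℚ :=
  if 0 ≤ n then ffall x n.toNat / ((n.toNat).factorial : ℚ) else 0

/-- `F_{ℓ,a,b}(λ) = ∑_{r=0}^{ℓ} λ^r C(ℓ-a-b-1, r) C(b, ℓ-r)`, where the first
binomial is generalized (its top may be negative) and the second ordinary. -/
def Ffun (l a b : ℕ) (lam : ℚ) : ℚ :=
  ∑ r ∈ Finset.range (l + 1),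
    lam ^ r * gchoose ((l : ℚ) - a - b - 1) r * (b.choose (l - r) : ℚ)

/-- `Q_{ℓ,a}(b,λ) = ∑_{m=0}^{min(a,ℓ)} C(a,m) ((a+b-ℓ)↓(a-m)) (ℓ↓m) λ^m (λ-1)^(ℓ-m)`. -/
def Qfun (l a : ℕ) (b lam : ℚ) : ℚ :=
  ∑ m ∈ Finset.range (min a l + 1),
    (a.choose m : ℚ) * ffall ((a : ℚ) + b - l) (a - m) * ffall (l : ℚ) m
      * lam ^ m * (lam - 1) ^ (l - m)


lemma ffall_eval (x : ℚ) (n : ℕ) : ffall x n = (descPochhammer ℚ n).eval x := by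
  induction n with
  | zero => simp [ffall]
  | succ n ih =>
    rw [ffall, Finset.prod_range_succ, ← ffall, ih, descPochhammer_succ_right]
    simp

lemma ffall_natCast (c n : ℕ) : ffall (c : ℚ) n = (c.descFactorial n : ℚ) := by
  rw [ffall_eval, descPochhammer_eval_eq_descFactorial]

lemma ffall_neg (n r : ℕ) :
    ffall (-(n : ℚ) - 1) r = (-1) ^ r * ffall ((n + r : ℕ) : ℚ) r := by
  unfold ffall
  rw [← Finset.prod_range_reflect (fun i => ((n + r : ℕ) : ℚ) - i) r]
  rw [show ((-1 : ℚ)) ^ r = ∏ _i ∈ Finset.range r, (-1 : ℚ) by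
    rw [Finset.prod_const, Finset.card_range]]
  rw [← Finset.prod_mul_distrib]
  apply Finset.prod_congr rfl
  intro i hi
  simp only [Finset.mem_range] at hi
  have h1 : ((r - 1 - i : ℕ) : ℚ) = (r : ℚ) - 1 - i := by
    have : (r - 1 - i) + (1 + i) = r := by omega
    have := congrArg (fun k : ℕ => (k : ℚ)) this
    push_cast at this
    linarith
  rw [h1]
  push_cast
  ring

lemma gchoose_natCast (x : ℚ) (r : ℕ) :
    gchoose x (r : ℤ) = ffall x r / (r.factorial : ℚ) := by
  simp [gchoose]

lemma gchoose_nat (c r : ℕ) : gchoose (c : ℚ) (r : ℤ) = (c.choose r : ℚ) := by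
  rw [gchoose_natCast, ffall_natCast, Nat.descFactorial_eq_factorial_mul_choose]
  have : (r.factorial : ℚ) ≠ 0 := Nat.cast_ne_zero.mpr r.factorial_ne_zero
  push_cast
  field_simp

lemma gchoose_neg (n r : ℕ) :
    gchoose (-(n : ℚ) - 1) (r : ℤ) = (-1) ^ r * ((n + r).choose r : ℚ) := by
  rw [gchoose_natCast, ffall_neg, ffall_natCast, Nat.descFactorial_eq_factorial_mul_choose]
  have : (r.factorial : ℚ) ≠ 0 := Nat.cast_ne_zero.mpr r.factorial_ne_zero
  push_cast
  field_simp

lemma key_choose (a b l n r : ℕ) (hl : l ≤ a + b) (hn : n = a + b - l) (hr : r ≤ l) :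
    ∑ m ∈ Finset.range (r + 1), a.choose m * (b.choose (l - m) * (l - m).choose (r - m))
      = (n + r).choose r * b.choose (l - r) := by
  by_cases hb : b < l - r
  · rw [Nat.choose_eq_zero_of_lt hb, Nat.mul_zero]
    apply Finset.sum_eq_zero
    intro m hm; simp only [Finset.mem_range] at hm
    rw [Nat.choose_eq_zero_of_lt (show b < l - m by omega)]
    simp
  push_neg at hb
  rw [Finset.sum_congr rfl (fun m hm => ?_), ← Finset.mul_sum,
    show n + r = a + (b - (l - r)) by omega, Nat.add_choose_eq,
    Finset.Nat.sum_antidiagonal_eq_sum_range_succ_mk, Nat.mul_comm]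
  · simp only [Finset.mem_range] at hm
    have hm' : m ≤ r := by omega
    show _ = b.choose (l - r) * (a.choose m * (b - (l - r)).choose (r - m))
    have h1 : (l - m).choose (r - m) = (l - m).choose (l - r) := by
      rw [← Nat.choose_symm (show r - m ≤ l - m by omega)]
      congr 1; omega
    by_cases hbl : b < l - m
    · rw [Nat.choose_eq_zero_of_lt hbl,
        Nat.choose_eq_zero_of_lt (show b - (l - r) < r - m by omega)]
      ring
    push_neg at hbl
    rw [h1, Nat.choose_mul (n := b) (show l - r ≤ l - m by omega), show (l - m) - (l - r) = r - m by omega]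
    ring

lemma key_fact (a b l n m : ℕ) (hl : l ≤ a + b) (hn : n = a + b - l) (hm : m ≤ l)
    (hma : m ≤ a) (hb : l - m ≤ b) :
    b.factorial * (n.descFactorial (a - m) * l.descFactorial m)
      = l.factorial * n.factorial * b.choose (l - m) := by
  have h1 : (b - (l - m)).factorial * n.descFactorial (a - m) = n.factorial := by
    rw [show b - (l - m) = n - (a - m) by omega]
    exact Nat.factorial_mul_descFactorial (show a - m ≤ n by omega)
  have h2 : (l - m).factorial * l.descFactorial m = l.factorial :=
    Nat.factorial_mul_descFactorial hm
  have h3 : b.choose (l - m) * (l - m).factorial * (b - (l - m)).factorial = b.factorial :=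
    Nat.choose_mul_factorial_mul_factorial hb
  rw [← h1, ← h2, ← h3]
  ring

lemma binom_sum (k m : ℕ) (lam : ℚ) :
    ∑ j ∈ Finset.range (k+1), lam ^ (m+j) * (-1 : ℚ)^(m+j) * (k.choose j : ℚ)
      = (-1 : ℚ)^(m+k) * lam^m * (lam-1)^k := by
  have h : ((-lam) + 1)^k = ∑ j ∈ Finset.range (k+1), (-lam)^j * 1^(k-j) * (k.choose j : ℚ) :=
    add_pow _ _ _
  have h2 : ∑ j ∈ Finset.range (k+1), lam ^ (m+j) * (-1 : ℚ)^(m+j) * (k.choose j : ℚ)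
      = lam^m * (-1 : ℚ)^m * ((-lam) + 1)^k := by
    rw [h, Finset.mul_sum]
    apply Finset.sum_congr rfl
    intro j _
    rw [pow_add, pow_add]
    ring
  have h3 : ((-lam) + 1)^k = (-1 : ℚ)^k * (lam-1)^k := by
    rw [show (-lam) + 1 = (-1) * (lam - 1) by ring, mul_pow]
  rw [h2, h3, pow_add]
  ring

lemma sumF (a b l n : ℕ) (lam : ℚ) (hl : l ≤ a + b) (hn : n = a + b - l) :
    ∑ r ∈ Finset.range (l+1),
        lam ^ r * ((-1 : ℚ)^r * (((n+r).choose r) : ℚ)) * ((b.choose (l-r)) : ℚ)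
      = ∑ m ∈ Finset.range (l+1),
          (a.choose m : ℚ) * (b.choose (l-m) : ℚ) * ((-1 : ℚ)^l * lam^m * (lam-1)^(l-m)) := by
  have step1 : ∀ r ∈ Finset.range (l+1),
      lam ^ r * ((-1 : ℚ)^r * (((n+r).choose r) : ℚ)) * ((b.choose (l-r)) : ℚ)
        = ∑ m ∈ Finset.range (r+1),
            (a.choose m : ℚ) * (b.choose (l-m) : ℚ) *
              (lam ^ r * (-1 : ℚ)^r * ((l-m).choose (r-m) : ℚ)) := by
    intro r hr
    simp only [Finset.mem_range] at hr
    have hk := key_choose a b l n r hl hn (by omega)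
    have hkq : (((n+r).choose r : ℕ) : ℚ) * ((b.choose (l-r) : ℕ) : ℚ)
        = ∑ m ∈ Finset.range (r+1),
            (a.choose m : ℚ) * ((b.choose (l-m) : ℚ) * ((l-m).choose (r-m) : ℚ)) := by
      rw [← Nat.cast_mul, ← hk]
      push_cast
      rfl
    calc lam ^ r * ((-1 : ℚ)^r * (((n+r).choose r) : ℚ)) * ((b.choose (l-r)) : ℚ)
        = (lam ^ r * (-1 : ℚ)^r) * ((((n+r).choose r) : ℚ) * ((b.choose (l-r)) : ℚ)) := by ring
      _ = _ := by
          rw [hkq, Finset.mul_sum]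
          apply Finset.sum_congr rfl
          intro m _
          ring
  rw [Finset.sum_congr rfl step1]
  simp only [Finset.range_eq_Ico]
  rw [← Finset.sum_Ico_Ico_comm 0 (l+1)
      (fun m r => (a.choose m : ℚ) * (b.choose (l-m) : ℚ) *
        (lam ^ r * (-1 : ℚ)^r * ((l-m).choose (r-m) : ℚ)))]
  apply Finset.sum_congr rfl
  intro m hm
  simp only [Finset.mem_Ico] at hm
  have hm' : m ≤ l := by omega
  rw [Finset.sum_Ico_eq_sum_range]
  rw [show l + 1 - m = (l - m) + 1 by omega]
  have hcon : ∀ j ∈ Finset.range ((l-m)+1),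
      (a.choose m : ℚ) * (b.choose (l-m) : ℚ) *
        (lam ^ (m+j) * (-1 : ℚ)^(m+j) * ((l-m).choose ((m+j)-m) : ℚ))
      = (a.choose m : ℚ) * (b.choose (l-m) : ℚ) *
        (lam ^ (m+j) * (-1 : ℚ)^(m+j) * ((l-m).choose j : ℚ)) := by
    intro j _
    norm_num
  rw [Finset.sum_congr rfl hcon, ← Finset.mul_sum, binom_sum (l-m) m lam,
    show m + (l - m) = l by omega]

lemma qside (a b l n : ℕ) (lam : ℚ) (hl : l ≤ a + b) (hn : n = a + b - l) :
    (-1 : ℚ)^l * (b.factorial : ℚ) / ((l.factorial : ℚ) * (n.factorial : ℚ))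
        * Qfun l a (b : ℚ) lam
      = ∑ m ∈ Finset.range (l+1),
          (a.choose m : ℚ) * (b.choose (l-m) : ℚ) * ((-1 : ℚ)^l * lam^m * (lam-1)^(l-m)) := by
  have hc : (a : ℚ) + b - l = (n : ℚ) := by
    have h' : l + n = a + b := by omega
    have := congrArg (fun k : ℕ => (k : ℚ)) h'
    push_cast at this
    linarith
  unfold Qfun
  rw [hc]
  have hext : ∑ m ∈ Finset.range (min a l + 1),
      (a.choose m : ℚ) * ffall (n : ℚ) (a - m) * ffall (l : ℚ) m * lam ^ m * (lam - 1) ^ (l - m)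
    = ∑ m ∈ Finset.range (l + 1),
      (a.choose m : ℚ) * ffall (n : ℚ) (a - m) * ffall (l : ℚ) m * lam ^ m * (lam - 1) ^ (l - m) := by
    apply Finset.sum_subset
    · intro x hx
      simp only [Finset.mem_range] at *
      omega
    · intro x hx hx'
      simp only [Finset.mem_range] at *
      have : a < x := by omega
      rw [Nat.choose_eq_zero_of_lt this]
      simp
  rw [hext, Finset.mul_sum]
  apply Finset.sum_congr rfl
  intro m hm
  simp only [Finset.mem_range] at hm
  have hm' : m ≤ l := by omega
  rw [ffall_natCast, ffall_natCast]
  by_cases hma : a < m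
  · rw [Nat.choose_eq_zero_of_lt hma]
    simp
  push_neg at hma
  by_cases hb : b < l - m
  · rw [Nat.choose_eq_zero_of_lt hb,
      Nat.descFactorial_eq_zero_iff_lt.mpr (show n < a - m by omega)]
    simp
  push_neg at hb
  have hQ := key_fact a b l n m hl hn hm' hma hb
  have hQq : (b.factorial : ℚ) * ((n.descFactorial (a-m) : ℚ) * (l.descFactorial m : ℚ))
      = (l.factorial : ℚ) * (n.factorial : ℚ) * (b.choose (l-m) : ℚ) := by
    exact_mod_cast hQ
  have h1 : (l.factorial : ℚ) ≠ 0 := Nat.cast_ne_zero.mpr l.factorial_ne_zero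
  have h2 : (n.factorial : ℚ) ≠ 0 := Nat.cast_ne_zero.mpr n.factorial_ne_zero
  field_simp
  linear_combination ((a.choose m : ℚ) * lam^m * (lam-1)^(l-m)) * hQq

open Polynomial in
lemma qpoly (l a : ℕ) (lam : ℚ) :
    ∃ P : Polynomial ℚ, P.natDegree ≤ a ∧ P.coeff a = (lam - 1) ^ l ∧
      ∀ x : ℚ, P.eval x = Qfun l a x lam := by
  refine ⟨∑ m ∈ Finset.range (min a l + 1),
      C ((a.choose m : ℚ) * ffall (l : ℚ) m * lam ^ m * (lam - 1) ^ (l - m)) *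
        ∏ i ∈ Finset.range (a - m), (X + C ((a : ℚ) - l - i)), ?_, ?_, ?_⟩
  · apply Polynomial.natDegree_sum_le_of_forall_le
    intro m _
    apply le_trans (Polynomial.natDegree_mul_le)
    rw [Polynomial.natDegree_C]
    apply le_trans (Nat.zero_add _).le
    apply le_trans (Polynomial.natDegree_prod_le _ _)
    calc ∑ i ∈ Finset.range (a - m), (X + C ((a : ℚ) - l - i)).natDegree
        = ∑ i ∈ Finset.range (a - m), 1 := by
          apply Finset.sum_congr rfl
          intro i _
          exact Polynomial.natDegree_X_add_C _
      _ = a - m := by simp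
      _ ≤ a := Nat.sub_le _ _
  · rw [Polynomial.finset_sum_coeff]
    rw [Finset.sum_eq_single_of_mem 0 (by simp)]
    · have hmon : (∏ i ∈ Finset.range (a - 0), (X + C ((a : ℚ) - l - i))).Monic :=
        Polynomial.monic_prod_of_monic _ _ (fun i _ => Polynomial.monic_X_add_C _)
      have h1 : ∀ i ∈ Finset.range (a - 0), (X + C ((a : ℚ) - l - i)).natDegree = 1 :=
        fun i _ => Polynomial.natDegree_X_add_C _
      have hdeg : (∏ i ∈ Finset.range (a - 0), (X + C ((a : ℚ) - l - i))).natDegree = a := by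
        rw [Polynomial.natDegree_prod _ _ (fun i _ => Polynomial.X_add_C_ne_zero _),
          Finset.sum_congr rfl h1]
        simp
      have hc1 := hmon.coeff_natDegree
      rw [hdeg] at hc1
      rw [Polynomial.coeff_C_mul, hc1]
      simp [ffall]
    · intro m hm hm0
      simp only [Finset.mem_range] at hm
      rw [Polynomial.coeff_C_mul]
      have h1 : ∀ i ∈ Finset.range (a - m), (X + C ((a : ℚ) - l - i)).natDegree = 1 :=
        fun i _ => Polynomial.natDegree_X_add_C _
      have hdeg : (∏ i ∈ Finset.range (a - m), (X + C ((a : ℚ) - l - i))).natDegree = a - m := by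
        rw [Polynomial.natDegree_prod _ _ (fun i _ => Polynomial.X_add_C_ne_zero _),
          Finset.sum_congr rfl h1]
        simp
      rw [Polynomial.coeff_eq_zero_of_natDegree_lt (by rw [hdeg]; omega), mul_zero]
  · intro x
    rw [Polynomial.eval_finset_sum]
    unfold Qfun
    apply Finset.sum_congr rfl
    intro m _
    rw [Polynomial.eval_mul, Polynomial.eval_C, Polynomial.eval_prod]
    have : ∏ i ∈ Finset.range (a - m), ((X + C ((a : ℚ) - l - i)).eval x)
        = ffall ((a : ℚ) + x - l) (a - m) := by
      unfold ffall
      apply Finset.prod_congr rfl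
      intro i _
      simp only [Polynomial.eval_add, Polynomial.eval_X, Polynomial.eval_C]
      ring
    rw [this]
    ring

/-- If `ℓ > a + b` then `F_{ℓ,a,b}(λ) = 0`; if `ℓ ≤ a + b` then
`F_{ℓ,a,b}(λ) = (-1)^ℓ b!/(ℓ! (a+b-ℓ)!) Q_{ℓ,a}(b,λ)`.  Moreover, for fixed
`ℓ, a, λ`, `b ↦ Q_{ℓ,a}(b,λ)` is a polynomial function of degree at most `a`
whose coefficient of `b^a` equals `(λ-1)^ℓ`. -/
theorem Ffun_eq_Qfun (l a b : ℕ) (lam : ℚ) :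
    (a + b < l → Ffun l a b lam = 0) ∧
    (l ≤ a + b → Ffun l a b lam =
      (-1 : ℚ) ^ l * (b.factorial : ℚ) / ((l.factorial : ℚ) * ((a + b - l).factorial : ℚ))
        * Qfun l a (b : ℚ) lam) ∧
    (∃ P : Polynomial ℚ, P.natDegree ≤ a ∧ P.coeff a = (lam - 1) ^ l ∧
      ∀ x : ℚ, P.eval x = Qfun l a x lam) := by
  refine ⟨?_, ?_, qpoly l a lam⟩
  · intro h
    unfold Ffun
    apply Finset.sum_eq_zero
    intro r hr
    simp only [Finset.mem_range] at hr
    have hc : (l : ℚ) - a - b - 1 = ((l - a - b - 1 : ℕ) : ℚ) := by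
      have h' : (l - a - b - 1) + (a + b + 1) = l := by omega
      have := congrArg (fun k : ℕ => (k : ℚ)) h'
      push_cast at this
      linarith
    rw [hc, gchoose_nat]
    rcases le_or_gt r (l - a - b - 1) with h1 | h1
    · rw [Nat.choose_eq_zero_of_lt (show b < l - r by omega)]
      simp
    · rw [Nat.choose_eq_zero_of_lt h1]
      simp
  · intro h
    have hcast : (l : ℚ) - a - b - 1 = -(((a + b - l : ℕ)) : ℚ) - 1 := by
      have h' : l + (a + b - l) = a + b := by omega
      have := congrArg (fun k : ℕ => (k : ℚ)) h'
      push_cast at this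
      linarith
    have step : Ffun l a b lam
        = ∑ r ∈ Finset.range (l + 1),
            lam ^ r * ((-1 : ℚ) ^ r * ((((a + b - l) + r).choose r) : ℚ))
              * ((b.choose (l - r)) : ℚ) := by
      unfold Ffun
      apply Finset.sum_congr rfl
      intro r _
      rw [hcast, gchoose_neg]
    rw [step, sumF a b l (a + b - l) lam h rfl]
    exact (qside a b l (a + b - l) lam h rfl).symm
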